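/- Let G be a finite graph and h > 2 an integer. Let G'' be the graph obtained from the complement of G by adding, for each vertex v of G, a new vertex v' adjacent only to v. Then G has an independent set of size h if and only if G'' contains a set S of h vertices that forms a clique in G'' and such that every vertex of S has a neighbor in G'' outside S. -/

import Mathlib

/-- A set of vertices is independent in a graph if no two of its elements are adjacent. -/
def SimpleGraph.IsIndepSet' {V : Type*} (G : SimpleGraph V) (S : Set V) : Prop :=
  S.Pairwise fun a b => ¬ G.Adj a b

/-- The graph `G''` obtained from the complement of `G` by adding, for each vertex
`v` of `G`, a new pendant vertex `Sum.inr v` adjacent only to `Sum.inl v`. -/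
def pendGraph {V : Type*} (G : SimpleGraph V) : SimpleGraph (V ⊕ V) :=
  SimpleGraph.fromRel (fun u v =>
    match u, v with
    | Sum.inl a, Sum.inl b => a ≠ b ∧ ¬ G.Adj a b
    | Sum.inl a, Sum.inr b => a = b
    | _, _ => False)

lemma pend_adj_inl_inl {V : Type*} (G : SimpleGraph V) (a b : V) :
    (pendGraph G).Adj (Sum.inl a) (Sum.inl b) ↔ a ≠ b ∧ ¬ G.Adj a b := by
  simp only [pendGraph, SimpleGraph.fromRel_adj]
  constructor
  · rintro ⟨hne, h | h⟩
    · exact h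
    · exact ⟨h.1.symm, fun hab => h.2 (G.adj_symm hab)⟩
  · rintro ⟨hne, h⟩
    exact ⟨by simpa using hne, Or.inl ⟨hne, h⟩⟩

lemma pend_adj_inr {V : Type*} (G : SimpleGraph V) (b : V) (w : V ⊕ V) :
    (pendGraph G).Adj w (Sum.inr b) → w = Sum.inl b := by
  rcases w with a | a <;>
    simp only [pendGraph, SimpleGraph.fromRel_adj] <;> rintro ⟨hne, h | h⟩ <;>
    first
      | (exact absurd h (by simp))
      | (simp_all)

/-- `G` has an independent set of size `h` iff `G''` contains a set
`S` of `h` vertices forming a clique such that every vertex of `S` has a neighbor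
outside `S`. -/
theorem statement_12 {V : Type*} [Fintype V] (G : SimpleGraph V)
    (h : ℕ) (hh : 2 < h) :
    (∃ S : Set V, G.IsIndepSet' S ∧ S.ncard = h) ↔
    (∃ S : Set (V ⊕ V), S.ncard = h ∧ (pendGraph G).IsClique S ∧
      ∀ v ∈ S, ∃ u ∉ S, (pendGraph G).Adj v u) := by
  constructor
  · rintro ⟨S, hind, hcard⟩
    refine ⟨Sum.inl '' S, by rw [Set.ncard_image_of_injective _ Sum.inl_injective, hcard], ?_, ?_⟩
    · rintro _ ⟨a, ha, rfl⟩ _ ⟨b, hb, rfl⟩ hne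
      have hab : a ≠ b := fun e => hne (by rw [e])
      exact (pend_adj_inl_inl G a b).mpr ⟨hab, hind ha hb hab⟩
    · rintro _ ⟨a, ha, rfl⟩
      refine ⟨Sum.inr a, by simp, ?_⟩
      simp only [pendGraph, SimpleGraph.fromRel_adj]
      exact ⟨by simp, Or.inl trivial⟩
  · rintro ⟨S, hcard, hclique, -⟩
    -- S contains no inr vertices
    have hno : ∀ w ∈ S, ∃ a, w = Sum.inl a := by
      rintro w hw
      rcases w with a | b
      · exact ⟨a, rfl⟩
      exfalso
      have hfin : S.Finite := Set.toFinite S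
      have h1 : 1 < (S \ {Sum.inr b}).ncard := by
        rw [Set.ncard_diff_singleton_of_mem hw, hcard]
        omega
      obtain ⟨x, hx⟩ : (S \ {Sum.inr b}).Nonempty :=
        Set.nonempty_of_ncard_ne_zero (by omega)
      obtain ⟨y, hy, hyx⟩ := Set.exists_ne_of_one_lt_ncard h1 x
      have hxb : x ≠ Sum.inr b := hx.2
      have hyb : y ≠ Sum.inr b := hy.2
      have hx' := pend_adj_inr G b x (hclique hx.1 hw hxb)
      have hy' := pend_adj_inr G b y (hclique hy.1 hw hyb)
      exact hyx (hy'.trans hx'.symm)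
    set T : Set V := Sum.inl ⁻¹' S with hT
    have himg : Sum.inl '' T = S := by
      apply Set.Subset.antisymm
      · rintro _ ⟨a, ha, rfl⟩; exact ha
      · intro w hw
        obtain ⟨a, rfl⟩ := hno w hw
        exact ⟨a, hw, rfl⟩
    refine ⟨T, ?_, ?_⟩
    · intro a ha b hb hab
      have := hclique ha hb (by simp [hab])
      exact ((pend_adj_inl_inl G a b).mp this).2
    · rw [← hcard, ← himg, Set.ncard_image_of_injective _ Sum.inl_injective]
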